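/- Let p, u, v, w, q, g, z, r be real numbers with q·r = g². Define F : ℝ³ → Matrix 3 3 ℝ by F(y) = [[p, u·e^{−y₁}, v·e^{−y₁}], [w·e^{−y₁}, q·e^{−2y₁}, g·e^{−2y₁}], [z·e^{−y₁}, g·e^{−2y₁}, r·e^{−2y₁}]], let B(y) = (F(y) − F(y)ᵀ)/2 be its antisymmetric part, and define the torsion H_{ijk}(y) = ∂_{y_i}B_{jk}(y) + ∂_{y_j}B_{ki}(y) + ∂_{y_k}B_{ij}(y). Then H_{ijk}(y) = 0 for all indices i,j,k ∈ {1,2,3} and all y ∈ ℝ³, i.e. the sigma model on the Manin triple (5|1) is torsionless. -/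

import Mathlib

open Real Matrix

/-- The torsion potential of a sigma model tensor `F`: its antisymmetric part. -/
noncomputable def Bpot (F : (Fin 3 → ℝ) → Matrix (Fin 3) (Fin 3) ℝ)
    (y : Fin 3 → ℝ) : Matrix (Fin 3) (Fin 3) ℝ :=
  (1 / 2 : ℝ) • (F y - (F y)ᵀ)

/-- The torsion `H_{ijk} = ∂ᵢ B_{jk} + ∂ⱼ B_{ki} + ∂ₖ B_{ij}` of a sigma model
tensor `F`, where `∂ᵢ` is the partial derivative in the `i`-th coordinate. -/
noncomputable def torsionH (F : (Fin 3 → ℝ) → Matrix (Fin 3) (Fin 3) ℝ)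
    (y : Fin 3 → ℝ) (i j k : Fin 3) : ℝ :=
  deriv (fun t => Bpot F (Function.update y i t) j k) (y i) +
  deriv (fun t => Bpot F (Function.update y j t) k i) (y j) +
  deriv (fun t => Bpot F (Function.update y k t) i j) (y k)

/-- The tensor `F` of the sigma model on the Manin triple `(5|1)`. -/
noncomputable def F51 (p u v w q g z r : ℝ) (y : Fin 3 → ℝ) : Matrix (Fin 3) (Fin 3) ℝ :=
  !![p,                  u * exp (-(y 0)),       v * exp (-(y 0));
     w * exp (-(y 0)),   q * exp (-(2 * y 0)),   g * exp (-(2 * y 0));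
     z * exp (-(y 0)),   g * exp (-(2 * y 0)),   r * exp (-(2 * y 0))]

lemma dkey (a b x : ℝ) :
    deriv (fun t : ℝ => a * Real.exp (-t) - b * Real.exp (-t)) x = (b - a) * Real.exp (-x) := by
  have he : HasDerivAt (fun t : ℝ => Real.exp (-t)) (-Real.exp (-x)) x := by
    simpa [Function.comp_def] using (Real.hasDerivAt_exp (-x)).comp x (hasDerivAt_neg x)
  have h := (he.const_mul a).sub (he.const_mul b)
  have h2 : (b - a) * Real.exp (-x) = a * -Real.exp (-x) - b * -Real.exp (-x) := by ring
  rw [h2]; exact h.deriv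

set_option maxHeartbeats 2000000 in
/-- The sigma model on the Manin triple `(5|1)` is torsionless. -/
theorem torsion51_eq_zero (p u v w q g z r : ℝ) (hqr : q * r = g ^ 2) :
    ∀ (y : Fin 3 → ℝ) (i j k : Fin 3), torsionH (F51 p u v w q g z r) y i j k = 0 := by
  intro y i j k
  fin_cases i <;> fin_cases j <;> fin_cases k <;>
    simp only [torsionH, Bpot, Matrix.smul_apply, Matrix.sub_apply, Matrix.transpose_apply] <;>
    simp [F51, Function.update, dkey] <;> ring
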